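/- Let α > 2, τ > 0, and Δh > 0 be real and let N_a be a positive integer. For positive integers N_U with 1 ≤ N_U ≤ N_a, define λ*(N_U) := 1 / ( π·Δh²·( ω(N_U, α, τ/(N_a − N_U + 1)) − 1 ) ), where ω(N,α,t) := 1 + 2·∫_{1}^{∞} x · (1 − (1 + t·x^{−α})^{−N}) dx. Then λ*(1) > λ*(N_U) for every integer N_U with 2 ≤ N_U ≤ N_a. -/

import Mathlib

open MeasureTheory Set Real

/-- The interference functional `ω(N, α, t)` of the paper, in integral form. -/
noncomputable def omegaFun (N : ℕ) (α t : ℝ) : ℝ :=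
  1 + 2 * ∫ x in Ioi (1 : ℝ), x * (1 - ((1 + t * x ^ (-α)) ^ N)⁻¹)

/-- The critical density `λ*(N_U) = 1/(π Δh² (ω(N_U, α, τ/(Na − N_U + 1)) − 1))`. -/
noncomputable def criticalDensity (Nu Na : ℕ) (α τ Δh : ℝ) : ℝ :=
  1 / (π * Δh ^ 2 * (omegaFun Nu α (τ / ((Na : ℝ) - Nu + 1)) - 1))

/-- Theorem 2 of the paper: for `α > 2`, `τ > 0`, `Δh > 0` and a positive
integer `Na`, single-user beamforming (`N_U = 1`) achieves a strictly larger critical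
density than SDMA or full SDMA with `2 ≤ N_U ≤ Na`. -/

lemma aux_integrable (N : ℕ) (α t : ℝ) (hα : 2 < α) (ht : 0 < t) :
    IntegrableOn (fun x : ℝ => x * (1 - ((1 + t * x ^ (-α)) ^ N)⁻¹)) (Ioi 1) := by
  have hbound : IntegrableOn (fun x : ℝ => (N : ℝ) * t * x ^ (1 - α)) (Ioi 1) :=
    (integrableOn_Ioi_rpow_of_lt (by linarith) one_pos).const_mul _
  have hrp : ContinuousOn (fun x : ℝ => x ^ (-α)) (Ioi (1:ℝ)) :=
    continuousOn_id.rpow_const (fun x hx => Or.inl (lt_trans one_pos hx).ne')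
  have hbase : ContinuousOn (fun x : ℝ => (1 + t * x ^ (-α)) ^ N) (Ioi (1:ℝ)) :=
    (continuousOn_const.add (continuousOn_const.mul hrp)).pow N
  have hcont : ContinuousOn (fun x : ℝ => x * (1 - ((1 + t * x ^ (-α)) ^ N)⁻¹)) (Ioi 1) := by
    refine continuousOn_id.mul (continuousOn_const.sub (hbase.inv₀ ?_))
    intro x hx
    have hu : 0 < t * x ^ (-α) := mul_pos ht (rpow_pos_of_pos (lt_trans one_pos hx) _)
    positivity
  refine Integrable.mono' hbound (hcont.aestronglyMeasurable measurableSet_Ioi) ?_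
  filter_upwards [ae_restrict_mem measurableSet_Ioi] with x hx
  have hx1 : (1:ℝ) < x := hx
  have hx0 : (0:ℝ) < x := by linarith
  set u := t * x ^ (-α) with hu_def
  have hu : 0 < u := mul_pos ht (rpow_pos_of_pos hx0 _)
  have h1u : (0:ℝ) < 1 + u := by linarith
  have hfrac : u / (1 + u) ≤ u := by
    rw [div_le_iff₀ h1u]; nlinarith
  have hfrac1 : u / (1 + u) < 1 := by
    rw [div_lt_one h1u]; linarith
  have hbern : 1 + (N:ℝ) * (-(u / (1 + u))) ≤ (1 + (-(u / (1 + u)))) ^ N :=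
    one_add_mul_le_pow (by nlinarith [div_nonneg hu.le h1u.le]) N
  have hkey : 1 - (N:ℝ) * u ≤ ((1 + u) ^ N)⁻¹ := by
    have heq : 1 + (-(u / (1 + u))) = (1 + u)⁻¹ := by
      field_simp
      ring
    rw [heq, inv_pow] at hbern
    have hNfrac : (N:ℝ) * (u / (1+u)) ≤ (N:ℝ) * u :=
      mul_le_mul_of_nonneg_left hfrac (Nat.cast_nonneg N)
    linarith
  have hpow1 : (1:ℝ) ≤ (1 + u) ^ N := one_le_pow₀ (by linarith)
  have h1 : 1 - ((1 + u) ^ N)⁻¹ ≤ (N:ℝ) * u := by linarith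
  have h0 : 0 ≤ 1 - ((1 + u) ^ N)⁻¹ := by
    have : ((1 + u) ^ N)⁻¹ ≤ 1 := inv_le_one_of_one_le₀ hpow1
    linarith
  rw [Real.norm_eq_abs, abs_of_nonneg (by positivity)]
  calc x * (1 - ((1 + u) ^ N)⁻¹) ≤ x * ((N:ℝ) * u) :=
        mul_le_mul_of_nonneg_left h1 hx0.le
    _ = (N:ℝ) * t * (x * x ^ (-α)) := by rw [hu_def]; ring
    _ = (N:ℝ) * t * x ^ (1 - α) := by
        rw [show (1:ℝ) - α = 1 + (-α) by ring, rpow_add hx0, rpow_one]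

lemma aux_pos (g : ℝ → ℝ) (hg : IntegrableOn g (Ioi 1)) (hpos : ∀ x ∈ Ioi (1:ℝ), 0 < g x) :
    0 < ∫ x in Ioi (1:ℝ), g x := by
  rw [setIntegral_pos_iff_support_of_nonneg_ae
    (by filter_upwards [ae_restrict_mem measurableSet_Ioi] with x hx using (hpos x hx).le) hg]
  have hsub : Ioi (1:ℝ) ⊆ Function.support g ∩ Ioi 1 := fun x hx => ⟨(hpos x hx).ne', hx⟩
  calc (0:ENNReal) < volume (Ioi (1:ℝ)) := by rw [Real.volume_Ioi]; exact ENNReal.zero_lt_top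
    _ ≤ _ := measure_mono hsub

theorem SU_BF_maximizes_critical_density
    (α τ Δh : ℝ) (hα : 2 < α) (hτ : 0 < τ) (hΔh : 0 < Δh) (Na : ℕ) (hNa : 0 < Na) :
    ∀ Nu : ℕ, 2 ≤ Nu → Nu ≤ Na →
      criticalDensity Nu Na α τ Δh < criticalDensity 1 Na α τ Δh := by
  intro Nu h2 hle
  have hNa2 : (2:ℝ) ≤ Na := by
    exact_mod_cast le_trans h2 hle
  have hNuR : (2:ℝ) ≤ Nu := by exact_mod_cast h2
  have hNuNa : (Nu:ℝ) ≤ Na := by exact_mod_cast hle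
  set d1 : ℝ := (Na:ℝ) - 1 + 1 with hd1
  set d2 : ℝ := (Na:ℝ) - Nu + 1 with hd2
  have hd1e : d1 = (Na:ℝ) := by rw [hd1]; ring
  have hd2pos : 0 < d2 := by rw [hd2]; linarith
  have hd2lt : d2 < d1 := by rw [hd1, hd2]; linarith
  set t1 : ℝ := τ / d1 with ht1
  set t2 : ℝ := τ / d2 with ht2
  have ht1pos : 0 < t1 := div_pos hτ (by rw [hd1e]; linarith)
  have ht2pos : 0 < t2 := div_pos hτ hd2pos
  have ht12 : t1 < t2 := div_lt_div_of_pos_left hτ hd2pos hd2lt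
  set f1 : ℝ → ℝ := fun x => x * (1 - ((1 + t1 * x ^ (-α)) ^ (1:ℕ))⁻¹) with hf1
  set f2 : ℝ → ℝ := fun x => x * (1 - ((1 + t2 * x ^ (-α)) ^ Nu)⁻¹) with hf2
  have hi1 : IntegrableOn f1 (Ioi 1) := aux_integrable 1 α t1 hα ht1pos
  have hi2 : IntegrableOn f2 (Ioi 1) := aux_integrable Nu α t2 hα ht2pos
  have hpt : ∀ x ∈ Ioi (1:ℝ), f1 x < f2 x := by
    intro x hx
    have hx1 : (1:ℝ) < x := hx
    have hx0 : (0:ℝ) < x := by linarith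
    have hrp : 0 < x ^ (-α) := rpow_pos_of_pos hx0 _
    have hu1 : 0 < t1 * x ^ (-α) := mul_pos ht1pos hrp
    have hu2 : 0 < t2 * x ^ (-α) := mul_pos ht2pos hrp
    have hu12 : t1 * x ^ (-α) < t2 * x ^ (-α) := mul_lt_mul_of_pos_right ht12 hrp
    have hp1 : (1 + t2 * x ^ (-α)) ≤ (1 + t2 * x ^ (-α)) ^ Nu := by
      calc (1 + t2 * x ^ (-α)) = (1 + t2 * x ^ (-α)) ^ (1:ℕ) := (pow_one _).symm
        _ ≤ _ := pow_le_pow_right₀ (by linarith) (le_trans one_le_two h2)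
    have hlt : 1 + t1 * x ^ (-α) < (1 + t2 * x ^ (-α)) ^ Nu := by linarith
    have hinv : ((1 + t2 * x ^ (-α)) ^ Nu)⁻¹ < (1 + t1 * x ^ (-α))⁻¹ :=
      inv_strictAnti₀ (by linarith) hlt
    have : 1 - (1 + t1 * x ^ (-α))⁻¹ < 1 - ((1 + t2 * x ^ (-α)) ^ Nu)⁻¹ := by linarith
    simp only [hf1, hf2, pow_one]
    exact mul_lt_mul_of_pos_left this hx0
  have hIlt : ∫ x in Ioi (1:ℝ), f1 x < ∫ x in Ioi (1:ℝ), f2 x := by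
    have hdiff : 0 < ∫ x in Ioi (1:ℝ), (f2 x - f1 x) :=
      aux_pos _ (hi2.sub hi1) (fun x hx => sub_pos.2 (hpt x hx))
    rw [integral_sub hi2 hi1] at hdiff
    linarith
  have hIpos : 0 < ∫ x in Ioi (1:ℝ), f1 x :=
    aux_pos f1 hi1 (by
      intro x hx
      have hx1 : (1:ℝ) < x := hx
      have hx0 : (0:ℝ) < x := by linarith
      have hu1 : 0 < t1 * x ^ (-α) := mul_pos ht1pos (rpow_pos_of_pos hx0 _)
      have : (1 + t1 * x ^ (-α))⁻¹ < 1 := by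
        rw [inv_lt_one_iff₀]; right; linarith
      simp only [hf1, pow_one]
      exact mul_pos hx0 (by linarith))
  have hω1 : omegaFun 1 α (τ / ((Na:ℝ) - (1:ℕ) + 1)) - 1 = 2 * ∫ x in Ioi (1:ℝ), f1 x := by
    simp only [omegaFun, hf1, ht1, hd1, Nat.cast_one]
    ring
  have hω2 : omegaFun Nu α (τ / ((Na:ℝ) - Nu + 1)) - 1 = 2 * ∫ x in Ioi (1:ℝ), f2 x := by
    simp only [omegaFun, hf2, ht2, hd2]
    ring
  unfold criticalDensity
  rw [hω2]
  rw [show ((Na:ℝ) - (1:ℕ) + 1) = (Na:ℝ) - (1:ℕ) + 1 from rfl] at hω1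
  rw [hω1]
  have hD1 : 0 < π * Δh ^ 2 * (2 * ∫ x in Ioi (1:ℝ), f1 x) := by positivity
  apply one_div_lt_one_div_of_lt hD1
  have : (2:ℝ) * ∫ x in Ioi (1:ℝ), f1 x < 2 * ∫ x in Ioi (1:ℝ), f2 x := by linarith
  have hπ : 0 < π * Δh ^ 2 := by positivity
  exact mul_lt_mul_of_pos_left this hπ
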